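/- arXiv:2001.08645 — 2 statements merged into one kernel-verified Lean document; each statement's English description precedes it below -/
import Mathlib

section
/- Fix M > 0, ℓ > 12M², and E with E² ≥ 1 and E² < E^max(ℓ). Then the equation E_ℓ^Sch(r) = E² has exactly two solutions r₀ < r₁ in (2M, ∞); they satisfy 2M < r₀ < r_max^Sch(ℓ) < r₁ < r_min^Sch(ℓ), each is a simple root, and E_ℓ^Sch(r) < E² for every r ≥ r_min^Sch(ℓ). -/
/-- The Schwarzschild effective potential `E_ℓ^Sch(r) = (1 - 2M/r)(1 + ℓ/r²)`. -/
noncomputable def Esch (M ℓ r : ℝ) : ℝ := (1 - 2*M/r) * (1 + ℓ/r^2)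

/-- `r_max^Sch(ℓ)`, the location of the maximum of the effective potential. -/
noncomputable def rmaxSch (M ℓ : ℝ) : ℝ := ℓ/(2*M) * (1 - Real.sqrt (1 - 12*M^2/ℓ))

/-- `r_min^Sch(ℓ)`, the location of the minimum of the effective potential. -/
noncomputable def rminSch (M ℓ : ℝ) : ℝ := ℓ/(2*M) * (1 + Real.sqrt (1 - 12*M^2/ℓ))

lemma hasDerivAt_Esch (M ℓ : ℝ) {r : ℝ} (hr : r ≠ 0) :
    HasDerivAt (Esch M ℓ) (2*(M*r^2 - ℓ*r + 3*M*ℓ)/r^4) r := by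
  have h1 : HasDerivAt (fun x : ℝ => 1 - 2*M/x) (2*M/r^2) r := by
    have h := ((hasDerivAt_inv hr).const_mul (2*M)).const_sub 1
    have he : (fun x : ℝ => 1 - 2*M * x⁻¹) = (fun x : ℝ => 1 - 2*M/x) := by
      ext x; rw [div_eq_mul_inv]
    rw [he] at h
    refine h.congr_deriv ?_
    field_simp
  have h2 : HasDerivAt (fun x : ℝ => 1 + ℓ/x^2) (-2*ℓ/r^3) r := by
    have hp : HasDerivAt (fun x : ℝ => x^2) ((2:ℕ)*r^1) r := hasDerivAt_pow 2 r
    have h := ((hp.inv (pow_ne_zero 2 hr)).const_mul ℓ).const_add 1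
    have he : (fun x : ℝ => 1 + ℓ * (x^2)⁻¹) = (fun x : ℝ => 1 + ℓ/x^2) := by
      ext x; rw [div_eq_mul_inv]
    simp only [Pi.inv_apply] at h
    rw [he] at h
    refine h.congr_deriv ?_
    field_simp
    ring
  have h := h1.mul h2
  refine h.congr_deriv ?_
  field_simp
  ring

lemma Esch_sub_one (M ℓ : ℝ) {r : ℝ} (hr : r ≠ 0) :
    Esch M ℓ r - 1 = (-(2*M)*r^2 + ℓ*r - 2*M*ℓ)/r^3 := by
  unfold Esch
  field_simp
  ring

lemma Esch_two_M (M ℓ : ℝ) (hM : (0:ℝ) < M) : Esch M ℓ (2*M) = 0 := by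
  unfold Esch
  rw [div_self (by positivity : (2*M) ≠ 0)]
  ring

set_option maxHeartbeats 1000000 in
theorem stmt10 (M ℓ E : ℝ) (hM : 0 < M) (hℓ : 12*M^2 < ℓ) (hE1 : 1 ≤ E^2)
    (hEmax : E^2 < Esch M ℓ (rmaxSch M ℓ)) :
    ∃ r0 r1 : ℝ,
      2*M < r0 ∧ r0 < rmaxSch M ℓ ∧ rmaxSch M ℓ < r1 ∧ r1 < rminSch M ℓ ∧
      Esch M ℓ r0 = E^2 ∧ Esch M ℓ r1 = E^2 ∧
      deriv (Esch M ℓ) r0 ≠ 0 ∧ deriv (Esch M ℓ) r1 ≠ 0 ∧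
      (∀ r ∈ Set.Ioi (2*M), Esch M ℓ r = E^2 → r = r0 ∨ r = r1) ∧
      (∀ r : ℝ, rminSch M ℓ ≤ r → Esch M ℓ r < E^2) := by
  have hℓ0 : 0 < ℓ := lt_trans (by positivity) hℓ
  set a := rmaxSch M ℓ with ha
  set b := rminSch M ℓ with hb
  set s := Real.sqrt (1 - 12*M^2/ℓ) with hsdef
  have harg0 : 0 < 1 - 12*M^2/ℓ := by
    rw [sub_pos, div_lt_one hℓ0]; exact hℓ
  have hs0 : 0 < s := Real.sqrt_pos.mpr harg0
  have hssq : s^2 = 1 - 12*M^2/ℓ := Real.sq_sqrt harg0.le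
  have hssq' : ℓ * s^2 = ℓ - 12*M^2 := by
    rw [hssq]; field_simp
  clear_value a b s
  have hsum : M * (a + b) = ℓ := by
    rw [ha, hb, rmaxSch, rminSch, ← hsdef]
    field_simp
    ring
  have hprod : a * b = 3*ℓ := by
    rw [ha, hb, rmaxSch, rminSch, ← hsdef]
    have h2M : (2*M) ≠ 0 := by positivity
    field_simp
    nlinarith [hssq']
  have hfac : ∀ r : ℝ, M*r^2 - ℓ*r + 3*M*ℓ = M*(r-a)*(r-b) := by
    intro r
    linear_combination r * hsum - M * hprod
  have hb6 : 6*M < b := by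
    rw [hb, rminSch, ← hsdef, div_mul_eq_mul_div, lt_div_iff₀ (by positivity : (0:ℝ) < 2*M)]
    nlinarith [hs0]
  have hab : a < b := by
    rw [ha, hb, rmaxSch, rminSch, ← hsdef]
    have : 0 < ℓ/(2*M) := by positivity
    nlinarith [hs0]
  have h2a : 2*M < a := by
    nlinarith [hfac (2*M), mul_pos hM hℓ0, hb6]
  have ha0 : 0 < a := lt_trans (by positivity) h2a
  have hb0 : 0 < b := lt_trans (by positivity) hb6
  -- derivative formula
  have hderiv : ∀ r : ℝ, r ≠ 0 → deriv (Esch M ℓ) r = 2*(M*(r-a)*(r-b))/r^4 := by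
    intro r hr
    rw [(hasDerivAt_Esch M ℓ hr).deriv, ← hfac r]
  have hcont : ∀ r : ℝ, r ≠ 0 → ContinuousAt (Esch M ℓ) r := by
    intro r hr
    exact (hasDerivAt_Esch M ℓ hr).differentiableAt.continuousAt
  -- strict monotonicity on [2M, a]
  have hmono : StrictMonoOn (Esch M ℓ) (Set.Icc (2*M) a) := by
    apply strictMonoOn_of_deriv_pos (convex_Icc _ _)
    · intro x hx
      exact (hcont x (by nlinarith [hx.1])).continuousWithinAt
    · intro x hx
      rw [interior_Icc] at hx
      have hx0 : 0 < x := lt_trans (by positivity) hx.1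
      rw [hderiv x hx0.ne']
      apply div_pos _ (by positivity)
      have h1 := mul_pos hM (mul_pos (sub_pos.mpr hx.2) (sub_pos.mpr (lt_trans hx.2 hab)))
      nlinarith [h1]
  -- strict antitonicity on [a, b]
  have hanti : StrictAntiOn (Esch M ℓ) (Set.Icc a b) := by
    apply strictAntiOn_of_deriv_neg (convex_Icc _ _)
    · intro x hx
      exact (hcont x (by nlinarith [hx.1])).continuousWithinAt
    · intro x hx
      rw [interior_Icc] at hx
      have hx0 : 0 < x := lt_trans ha0 hx.1
      rw [hderiv x hx0.ne']
      apply div_neg_of_neg_of_pos _ (by positivity)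
      have h1 := mul_pos hM (mul_pos (sub_pos.mpr hx.1) (sub_pos.mpr hx.2))
      nlinarith [h1]
  -- Esch < E² beyond b
  have hlt1 : ∀ r : ℝ, b ≤ r → Esch M ℓ r < E^2 := by
    intro r hr
    have hr0 : 0 < r := lt_of_lt_of_le hb0 hr
    have hrne : r ≠ 0 := hr0.ne'
    have hkey := Esch_sub_one M ℓ hrne
    have hnum : -(2*M)*r^2 + ℓ*r - 2*M*ℓ < 0 := by
      have h1 : -(2*M)*r^2 + ℓ*r - 2*M*ℓ = -(M*(r-a)*(r-b)) - M*(r^2-ℓ) := by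
        linear_combination -hfac r
      have hge : 0 ≤ M*(r-a)*(r-b) :=
        mul_nonneg (mul_nonneg hM.le (by linarith)) (by linarith)
      have hbb : 3*ℓ < b^2 := by nlinarith [hprod, hab, hb0]
      have hr2 : ℓ < r^2 := by nlinarith [hbb, hr, hb0, hℓ0]
      have hpos : 0 < M*(r^2-ℓ) := mul_pos hM (by linarith)
      rw [h1]; linarith
    have : Esch M ℓ r - 1 < 0 := by
      rw [hkey]
      exact div_neg_of_neg_of_pos hnum (by positivity)
    linarith
  -- value at 2M
  have hE2M : Esch M ℓ (2*M) = 0 := Esch_two_M M ℓ hM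
  have hcIcc1 : ContinuousOn (Esch M ℓ) (Set.Icc (2*M) a) := by
    intro x hx
    exact (hcont x (by nlinarith [hx.1])).continuousWithinAt
  have hcIcc2 : ContinuousOn (Esch M ℓ) (Set.Icc a b) := by
    intro x hx
    exact (hcont x (by nlinarith [hx.1])).continuousWithinAt
  -- existence of r0
  have hmem0 : E^2 ∈ Set.Ioo (Esch M ℓ (2*M)) (Esch M ℓ a) := by
    rw [hE2M]
    exact ⟨by linarith, hEmax⟩
  obtain ⟨r0, hr0mem, hr0eq⟩ := intermediate_value_Ioo h2a.le hcIcc1 hmem0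
  -- existence of r1
  have hmem1 : E^2 ∈ Set.Ioo (Esch M ℓ b) (Esch M ℓ a) := ⟨hlt1 b le_rfl, hEmax⟩
  obtain ⟨r1, hr1mem, hr1eq⟩ := intermediate_value_Ioo' hab.le hcIcc2 hmem1
  have hr00 : 0 < r0 := lt_trans (by positivity) hr0mem.1
  have hr10 : 0 < r1 := lt_trans ha0 hr1mem.1
  refine ⟨r0, r1, hr0mem.1, hr0mem.2, hr1mem.1, hr1mem.2, hr0eq, hr1eq, ?_, ?_, ?_, hlt1⟩
  · rw [hderiv r0 hr00.ne']
    have : 0 < 2*(M*(r0-a)*(r0-b))/r0^4 := by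
      apply div_pos _ (by positivity)
      have h1 := mul_pos hM (mul_pos (sub_pos.mpr hr0mem.2)
        (sub_pos.mpr (lt_trans hr0mem.2 hab)))
      nlinarith [h1]
    exact this.ne'
  · rw [hderiv r1 hr10.ne']
    have : 2*(M*(r1-a)*(r1-b))/r1^4 < 0 := by
      apply div_neg_of_neg_of_pos _ (by positivity)
      have h1 := mul_pos hM (mul_pos (sub_pos.mpr hr1mem.1) (sub_pos.mpr hr1mem.2))
      nlinarith [h1]
    exact this.ne
  · intro r hr heq
    rcases le_or_gt r a with h | h
    · left
      exact hmono.injOn ⟨(le_of_lt hr), h⟩ ⟨hr0mem.1.le, hr0mem.2.le⟩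
        (by rw [heq, hr0eq])
    · rcases lt_or_ge r b with h' | h'
      · right
        exact hanti.injOn ⟨h.le, h'.le⟩ ⟨hr1mem.1.le, hr1mem.2.le⟩
          (by rw [heq, hr1eq])
      · exact absurd heq (hlt1 r h').ne
end

section
/- Fix M > 0 and E₁, E₂, ℓ₁, ℓ₂ with √(8/9) < E₁ < E₂ < 1 and ℓ_lb(E₂) < ℓ₁ < ℓ₂ < ℓ_ub(E₁), and set B_bound := [E₁, E₂] × [ℓ₁, ℓ₂]. For (E, ℓ) ∈ B_bound, let r₀^Sch(E,ℓ) < r₁^Sch(E,ℓ) denote the two smallest roots in (2M, ∞) of E_ℓ^Sch(r) = E². Then for every (E, ℓ) ∈ B_bound one has r₁^Sch(E,ℓ) − r₀^Sch(E,ℓ) ≥ r₁^Sch(E₂,ℓ₁) − r₀^Sch(E₂,ℓ₁) > 0; in particular there exists η > 0 such that r₁^Sch(E,ℓ) − r₀^Sch(E,ℓ) > 2η for all (E, ℓ) ∈ B_bound. -/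
/-- `ℓ_lb(E) = 12M²/(1 - 4α - 8α² + 8α√(α² + α))` with `α = (9/8)E² - 1`. -/
noncomputable def llb (M E : ℝ) : ℝ :=
  12*M^2 / (1 - 4*(9/8*E^2-1) - 8*(9/8*E^2-1)^2
    + 8*(9/8*E^2-1)*Real.sqrt ((9/8*E^2-1)^2 + (9/8*E^2-1)))

/-- `ℓ_ub(E) = 12M²/(1 - 4α - 8α² - 8α√(α² + α))` with `α = (9/8)E² - 1`. -/
noncomputable def lub (M E : ℝ) : ℝ :=
  12*M^2 / (1 - 4*(9/8*E^2-1) - 8*(9/8*E^2-1)^2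
    - 8*(9/8*E^2-1)*Real.sqrt ((9/8*E^2-1)^2 + (9/8*E^2-1)))

section
variable {M ℓ : ℝ}
variable {M ℓ : ℝ}
lemma lpos (hM : 0 < M) (hl : 12*M^2 ≤ ℓ) : 0 < ℓ := lt_of_lt_of_le (by positivity) hl
lemma sq_s (hM : 0 < M) (hl : 12*M^2 ≤ ℓ) :
    Real.sqrt (1 - 12*M^2/ℓ) ^ 2 * ℓ = ℓ - 12*M^2 := by
  have hl0 : 0 < ℓ := lpos hM hl
  have h : Real.sqrt (1 - 12*M^2/ℓ) ^ 2 = 1 - 12*M^2/ℓ :=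
    Real.sq_sqrt (by rw [sub_nonneg, div_le_one hl0]; exact hl)
  rw [h]; field_simp
lemma s_lt_one (hM : 0 < M) (hl : 12*M^2 ≤ ℓ) : Real.sqrt (1 - 12*M^2/ℓ) < 1 := by
  have hl0 : 0 < ℓ := lpos hM hl
  have h2 := sq_s hM hl
  have h0 : 0 ≤ Real.sqrt (1 - 12*M^2/ℓ) := Real.sqrt_nonneg _
  have h3 : Real.sqrt (1 - 12*M^2/ℓ) ^ 2 < 1 := by nlinarith [mul_pos hM hM]
  nlinarith [h3, h0]
lemma rmax_pos (hM : 0 < M) (hl : 12*M^2 ≤ ℓ) : 0 < rmaxSch M ℓ := by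
  have hl0 : 0 < ℓ := lpos hM hl
  have h1 := s_lt_one hM hl
  unfold rmaxSch
  exact mul_pos (by positivity) (by linarith)
lemma rmax_le_rmin (hM : 0 < M) (hl : 12*M^2 ≤ ℓ) : rmaxSch M ℓ ≤ rminSch M ℓ := by
  have hl0 : 0 < ℓ := lpos hM hl
  have h0 : 0 ≤ Real.sqrt (1 - 12*M^2/ℓ) := Real.sqrt_nonneg _
  unfold rmaxSch rminSch
  apply mul_le_mul_of_nonneg_left (by linarith) (by positivity)
lemma rmaxrmin_sum (hM : 0 < M) (hl : 12*M^2 ≤ ℓ) :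
    M * (rmaxSch M ℓ + rminSch M ℓ) = ℓ := by
  have hl0 : 0 < ℓ := lpos hM hl
  unfold rmaxSch rminSch
  set s := Real.sqrt (1 - 12*M^2/ℓ) with hs
  field_simp; ring
lemma rmaxrmin_prod (hM : 0 < M) (hl : 12*M^2 ≤ ℓ) :
    rmaxSch M ℓ * rminSch M ℓ = 3*ℓ := by
  have hl0 : 0 < ℓ := lpos hM hl
  have h2 := sq_s hM hl
  unfold rmaxSch rminSch
  set s := Real.sqrt (1 - 12*M^2/ℓ) with hs
  field_simp
  linear_combination (-1)*h2
lemma Qfact (hM : 0 < M) (hl : 12*M^2 ≤ ℓ) (r : ℝ) :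
    M*r^2 - ℓ*r + 3*M*ℓ = M*(r - rmaxSch M ℓ)*(r - rminSch M ℓ) := by
  have h1 := rmaxrmin_sum hM hl
  have h2 := rmaxrmin_prod hM hl
  linear_combination r*h1 - M*h2
lemma esch_diff1 (M ℓ a b : ℝ) (ha : a ≠ 0) (hb : b ≠ 0) :
    Esch M ℓ b - Esch M ℓ a =
      (b-a) * (2*(M*a^2-ℓ*a+3*M*ℓ)*b^2 + 2*(M*b^2-ℓ*b+3*M*ℓ)*a^2
        + (6*M*ℓ - ℓ*(a+b) + 2*M*a*b)*(a*b)) / (3*a^3*b^3) := by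
  unfold Esch; field_simp; ring
lemma esch_diff2 (M ℓ a b : ℝ) (ha : a ≠ 0) (hb : b ≠ 0) :
    Esch M ℓ b - Esch M ℓ a =
      ((b-a) * ((M*a^2-ℓ*a+3*M*ℓ)*b^2 + (M*b^2-ℓ*b+3*M*ℓ)*a^2)
        - M*ℓ*(b-a)^3) / (a^3*b^3) := by
  unfold Esch; field_simp; ring

lemma esch_mono (hM : 0 < M) (hl : 12*M^2 ≤ ℓ) {a b : ℝ} (ha : 0 < a)
    (hab : a < b) (hb : b ≤ rmaxSch M ℓ) : Esch M ℓ a < Esch M ℓ b := by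
  have hb0 : 0 < b := lt_trans ha hab
  have hxy := rmax_le_rmin hM hl
  have haX : a < rmaxSch M ℓ := lt_of_lt_of_le hab hb
  have hQa : 0 < M*a^2 - ℓ*a + 3*M*ℓ := by
    rw [Qfact hM hl]
    have h1 : a - rmaxSch M ℓ < 0 := by linarith
    have h2 : a - rminSch M ℓ < 0 := by linarith
    nlinarith [mul_pos hM (mul_pos (show 0 < rmaxSch M ℓ - a by linarith)
      (show 0 < rminSch M ℓ - a by linarith))]
  have hQb : 0 ≤ M*b^2 - ℓ*b + 3*M*ℓ := by
    rw [Qfact hM hl]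
    have h1 : b - rmaxSch M ℓ ≤ 0 := by linarith
    have h2 : b - rminSch M ℓ ≤ 0 := by linarith
    nlinarith [mul_nonneg hM.le (mul_nonneg (show 0 ≤ rmaxSch M ℓ - b by linarith)
      (show 0 ≤ rminSch M ℓ - b by linarith))]
  have hC : 0 ≤ 6*M*ℓ - ℓ*(a+b) + 2*M*a*b := by
    have hid : 6*M*ℓ - ℓ*(a+b) + 2*M*a*b
        = M*((rmaxSch M ℓ - a)*(rminSch M ℓ - b) + (rmaxSch M ℓ - b)*(rminSch M ℓ - a)) := by
      have h1 := rmaxrmin_sum hM hl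
      have h2 := rmaxrmin_prod hM hl
      linear_combination (a+b)*h1 - 2*M*h2
    rw [hid]
    have h1 : 0 ≤ rmaxSch M ℓ - a := by linarith
    have h2 : 0 ≤ rmaxSch M ℓ - b := by linarith
    have h3 : 0 ≤ rminSch M ℓ - a := by linarith
    have h4 : 0 ≤ rminSch M ℓ - b := by linarith
    nlinarith [mul_nonneg h1 h4, mul_nonneg h2 h3]
  have hd := esch_diff1 M ℓ a b (ne_of_gt ha) (ne_of_gt hb0)
  have hpos : 0 < (b-a) * (2*(M*a^2-ℓ*a+3*M*ℓ)*b^2 + 2*(M*b^2-ℓ*b+3*M*ℓ)*a^2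
        + (6*M*ℓ - ℓ*(a+b) + 2*M*a*b)*(a*b)) / (3*a^3*b^3) := by
    apply div_pos _ (by positivity)
    apply mul_pos (by linarith)
    have t1 : 0 < 2*(M*a^2-ℓ*a+3*M*ℓ)*b^2 := by positivity
    have t2 : 0 ≤ 2*(M*b^2-ℓ*b+3*M*ℓ)*a^2 := by positivity
    have t3 : 0 ≤ (6*M*ℓ - ℓ*(a+b) + 2*M*a*b)*(a*b) := mul_nonneg hC (by positivity)
    linarith
  linarith

lemma esch_anti (hM : 0 < M) (hl : 12*M^2 ≤ ℓ) {a b : ℝ} (hra : rmaxSch M ℓ ≤ a)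
    (hab : a < b) (hb : b ≤ rminSch M ℓ) : Esch M ℓ b < Esch M ℓ a := by
  have hl0 : 0 < ℓ := lpos hM hl
  have ha0 : 0 < a := lt_of_lt_of_le (rmax_pos hM hl) hra
  have hb0 : 0 < b := lt_trans ha0 hab
  have hQa : M*a^2 - ℓ*a + 3*M*ℓ ≤ 0 := by
    rw [Qfact hM hl]
    have h1 : 0 ≤ a - rmaxSch M ℓ := by linarith
    have h2 : a - rminSch M ℓ ≤ 0 := by linarith
    nlinarith [mul_nonneg hM.le (mul_nonneg h1 (show 0 ≤ rminSch M ℓ - a by linarith))]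
  have hQb : M*b^2 - ℓ*b + 3*M*ℓ ≤ 0 := by
    rw [Qfact hM hl]
    have h1 : 0 ≤ b - rmaxSch M ℓ := by linarith
    have h2 : b - rminSch M ℓ ≤ 0 := by linarith
    nlinarith [mul_nonneg hM.le (mul_nonneg h1 (show 0 ≤ rminSch M ℓ - b by linarith))]
  have hd := esch_diff2 M ℓ a b (ne_of_gt ha0) (ne_of_gt hb0)
  have hneg : ((b-a) * ((M*a^2-ℓ*a+3*M*ℓ)*b^2 + (M*b^2-ℓ*b+3*M*ℓ)*a^2)
        - M*ℓ*(b-a)^3) / (a^3*b^3) < 0 := by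
    apply div_neg_of_neg_of_pos _ (by positivity)
    have t1 : (M*a^2-ℓ*a+3*M*ℓ)*b^2 ≤ 0 := mul_nonpos_of_nonpos_of_nonneg hQa (by positivity)
    have t2 : (M*b^2-ℓ*b+3*M*ℓ)*a^2 ≤ 0 := mul_nonpos_of_nonpos_of_nonneg hQb (by positivity)
    have t3 : 0 < M*ℓ*(b-a)^3 := by
      apply mul_pos (by positivity)
      exact pow_pos (by linarith) 3
    nlinarith
  linarith

lemma rmax_mul (hM : 0 < M) (hl : 12*M^2 ≤ ℓ) :
    rmaxSch M ℓ * (1 + Real.sqrt (1 - 12*M^2/ℓ)) = 6*M := by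
  have hl0 : 0 < ℓ := lpos hM hl
  have h2 := sq_s hM hl
  unfold rmaxSch
  set s := Real.sqrt (1 - 12*M^2/ℓ) with hs
  field_simp
  nlinarith [h2]


lemma rmax_le_6M (hM : 0 < M) (hl : 12*M^2 ≤ ℓ) : rmaxSch M ℓ ≤ 6*M := by
  have h := rmax_mul hM hl
  have hp := rmax_pos hM hl
  have h0 : 0 ≤ Real.sqrt (1 - 12*M^2/ℓ) := Real.sqrt_nonneg _
  nlinarith


lemma rmin_ge_6M (hM : 0 < M) (hl : 12*M^2 ≤ ℓ) : 6*M ≤ rminSch M ℓ := by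
  have hl0 : 0 < ℓ := lpos hM hl
  have h0 : 0 ≤ Real.sqrt (1 - 12*M^2/ℓ) := Real.sqrt_nonneg _
  have h2 : 6*M ≤ ℓ/(2*M) := by rw [le_div_iff₀ (by positivity)]; nlinarith
  have h3 : ℓ/(2*M) * 1 ≤ ℓ/(2*M) * (1 + Real.sqrt (1 - 12*M^2/ℓ)) :=
    mul_le_mul_of_nonneg_left (by linarith) (by positivity)
  unfold rminSch
  linarith


lemma sqrt_le_sqrt' (hM : 0 < M) {ℓ' : ℝ} (hl : 12*M^2 ≤ ℓ') (hll : ℓ' ≤ ℓ) :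
    Real.sqrt (1 - 12*M^2/ℓ') ≤ Real.sqrt (1 - 12*M^2/ℓ) := by
  have hl0 : 0 < ℓ' := lpos hM hl
  apply Real.sqrt_le_sqrt
  have : 12*M^2/ℓ ≤ 12*M^2/ℓ' := div_le_div_of_nonneg_left (by positivity) hl0 hll
  linarith


lemma rmax_anti {ℓ' : ℝ} (hM : 0 < M) (hl : 12*M^2 ≤ ℓ') (hll : ℓ' ≤ ℓ) :
    rmaxSch M ℓ ≤ rmaxSch M ℓ' := by
  have hl2 : 12*M^2 ≤ ℓ := le_trans hl hll
  have h1 := rmax_mul hM hl2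
  have h2 := rmax_mul hM hl
  have hp2 := rmax_pos hM hl
  have hsle := sqrt_le_sqrt' hM hl hll
  have h0 : 0 ≤ Real.sqrt (1 - 12*M^2/ℓ) := Real.sqrt_nonneg _
  have key : rmaxSch M ℓ * (1 + Real.sqrt (1 - 12*M^2/ℓ))
      ≤ rmaxSch M ℓ' * (1 + Real.sqrt (1 - 12*M^2/ℓ)) := by
    nlinarith
  exact le_of_mul_le_mul_right key (by linarith)


lemma rmin_mono {ℓ' : ℝ} (hM : 0 < M) (hl : 12*M^2 ≤ ℓ') (hll : ℓ' ≤ ℓ) :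
    rminSch M ℓ' ≤ rminSch M ℓ := by
  have hl0 : 0 < ℓ' := lpos hM hl
  have hsle := sqrt_le_sqrt' hM hl hll
  have h0 : 0 ≤ Real.sqrt (1 - 12*M^2/ℓ') := Real.sqrt_nonneg _
  have h1 : ℓ'/(2*M) ≤ ℓ/(2*M) := by gcongr
  have hl02 : 0 < ℓ := lpos hM (le_trans hl hll)
  unfold rminSch
  exact mul_le_mul h1 (by linarith) (by linarith) (le_of_lt (div_pos hl02 (by positivity)))


lemma esch_ldiff (M ℓ ℓ' x : ℝ) (hx : x ≠ 0) :
    Esch M ℓ x - Esch M ℓ' x = (ℓ - ℓ')*(x - 2*M)/x^3 := by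
  unfold Esch; field_simp; ring

lemma llb_ge_aux {M a s : ℝ} (hM : 0 < M) (ha : 0 < a) (ha8 : a < 1/8)
    (hs0 : 0 ≤ s) (hsle : s ≤ (1+2*a)/2) :
    12*M^2 ≤ 12*M^2 / (1 - 4*a - 8*a^2 + 8*a*s) := by
  have hD1 : 1 - 4*a - 8*a^2 + 8*a*s ≤ 1 := by
    nlinarith [mul_le_mul_of_nonneg_left hsle (show (0:ℝ) ≤ 8*a by linarith)]
  have hD0 : 0 < 1 - 4*a - 8*a^2 + 8*a*s := by
    nlinarith [mul_nonneg ha.le hs0, mul_pos ha (show (0:ℝ) < 1/8 - a by linarith)]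
  rw [le_div_iff₀ hD0]
  nlinarith [sq_nonneg M]

lemma llb_ge {M E : ℝ} (hM : 0 < M) (hE : Real.sqrt (8/9) < E) (hE1 : E < 1) :
    12*M^2 ≤ llb M E := by
  have hE0 : 0 < E := lt_of_le_of_lt (Real.sqrt_nonneg _) hE
  have h89 : Real.sqrt (8/9) ^ 2 = 8/9 := Real.sq_sqrt (by norm_num)
  have hE2 : 8/9 < E^2 := by nlinarith [Real.sqrt_nonneg (8/9 : ℝ)]
  have ha : 0 < 9/8*E^2-1 := by nlinarith
  have ha8 : 9/8*E^2-1 < 1/8 := by nlinarith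
  have hsle : Real.sqrt ((9/8*E^2-1)^2 + (9/8*E^2-1)) ≤ (1+2*(9/8*E^2-1))/2 := by
    rw [show (1+2*(9/8*E^2-1))/2 = Real.sqrt (((1+2*(9/8*E^2-1))/2)^2) from
      (Real.sqrt_sq (by nlinarith)).symm]
    apply Real.sqrt_le_sqrt; nlinarith
  exact llb_ge_aux hM ha ha8 (Real.sqrt_nonneg _) hsle

end

set_option maxHeartbeats 1000000 in
theorem stmt18 (M E₁ E₂ ℓ₁ ℓ₂ : ℝ) (hM : 0 < M)
    (hE1 : Real.sqrt (8/9) < E₁) (hE12 : E₁ < E₂) (hE2 : E₂ < 1)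
    (hl1 : llb M E₂ < ℓ₁) (hl12 : ℓ₁ < ℓ₂) (hl2 : ℓ₂ < lub M E₁)
    (r0 r1 : ℝ → ℝ → ℝ)
    (hroots : ∀ E ∈ Set.Icc E₁ E₂, ∀ ℓ ∈ Set.Icc ℓ₁ ℓ₂,
      2*M < r0 E ℓ ∧ r0 E ℓ < rmaxSch M ℓ ∧ rmaxSch M ℓ < r1 E ℓ ∧ r1 E ℓ < rminSch M ℓ ∧
      Esch M ℓ (r0 E ℓ) = E^2 ∧ Esch M ℓ (r1 E ℓ) = E^2) :
    (∀ E ∈ Set.Icc E₁ E₂, ∀ ℓ ∈ Set.Icc ℓ₁ ℓ₂,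
       r1 E₂ ℓ₁ - r0 E₂ ℓ₁ ≤ r1 E ℓ - r0 E ℓ) ∧
    0 < r1 E₂ ℓ₁ - r0 E₂ ℓ₁ ∧
    ∃ η > 0, ∀ E ∈ Set.Icc E₁ E₂, ∀ ℓ ∈ Set.Icc ℓ₁ ℓ₂, 2*η < r1 E ℓ - r0 E ℓ := by
  have hE10 : 0 < E₁ := lt_of_le_of_lt (Real.sqrt_nonneg _) hE1
  have hE2s : Real.sqrt (8/9) < E₂ := lt_trans hE1 hE12
  have h12 : 12*M^2 < ℓ₁ := lt_of_le_of_lt (llb_ge hM hE2s hE2) hl1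
  have hE2mem : E₂ ∈ Set.Icc E₁ E₂ := ⟨le_of_lt hE12, le_refl _⟩
  have hl1mem : ℓ₁ ∈ Set.Icc ℓ₁ ℓ₂ := ⟨le_refl _, le_of_lt hl12⟩
  obtain ⟨hA1, hA2, hA3, hA4, hA5, hA6⟩ := hroots E₂ hE2mem ℓ₁ hl1mem
  have ha1pos : 0 < r0 E₂ ℓ₁ := by linarith
  have key : ∀ E ∈ Set.Icc E₁ E₂, ∀ ℓ ∈ Set.Icc ℓ₁ ℓ₂,
      r1 E₂ ℓ₁ - r0 E₂ ℓ₁ ≤ r1 E ℓ - r0 E ℓ := by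
    intro E hE ℓ hℓ
    obtain ⟨hB1, hB2, hB3, hB4, hB5, hB6⟩ := hroots E hE ℓ hℓ
    have hE0 : 0 < E := lt_of_lt_of_le hE10 hE.1
    have hEsq : E^2 ≤ E₂^2 := by nlinarith [hE.2]
    have hll : ℓ₁ ≤ ℓ := hℓ.1
    have h12l : 12*M^2 ≤ ℓ := le_trans h12.le hll
    have hxanti : rmaxSch M ℓ ≤ rmaxSch M ℓ₁ := rmax_anti hM h12.le hll
    have hx6 : rmaxSch M ℓ₁ ≤ 6*M := rmax_le_6M hM h12.le
    have hy6 : 6*M ≤ rminSch M ℓ := rmin_ge_6M hM h12l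
    have hapos : 0 < r0 E ℓ := by linarith
    have hldiff : ∀ x : ℝ, 2*M < x → Esch M ℓ₁ x ≤ Esch M ℓ x := by
      intro x hx
      have hx0 : (0:ℝ) < x := by linarith
      have h := esch_ldiff M ℓ ℓ₁ x (ne_of_gt hx0)
      have h2 : 0 ≤ (ℓ - ℓ₁)*(x - 2*M)/x^3 :=
        div_nonneg (mul_nonneg (by linarith) (by linarith)) (by positivity)
      linarith
    have h1 : r0 E ℓ ≤ r0 E₂ ℓ₁ := by
      by_contra hcon; push_neg at hcon
      have hmono := esch_mono hM h12.le ha1pos hcon (le_trans (le_of_lt hB2) hxanti)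
      have hp := hldiff (r0 E ℓ) hB1
      linarith
    have h2 : r1 E₂ ℓ₁ ≤ r1 E ℓ := by
      by_contra hcon; push_neg at hcon
      have hb1 : 2*M < r1 E ℓ := by linarith
      rcases lt_or_ge (r0 E₂ ℓ₁) (r1 E ℓ) with hib | hib
      · rcases le_or_gt (r1 E ℓ) (rmaxSch M ℓ₁) with hcase | hcase
        · have hmono := esch_mono hM h12.le ha1pos hib hcase
          have hp := hldiff (r1 E ℓ) hb1
          linarith
        · have hanti := esch_anti hM h12.le hcase.le hcon (le_of_lt hA4)
          have hp := hldiff (r1 E ℓ) hb1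
          linarith
      · rcases lt_or_eq_of_le hib with hlt | heq
        · have hanti := esch_anti hM h12l hB3.le hlt (by linarith)
          have hp := hldiff (r0 E₂ ℓ₁) hA1
          linarith
        · have hp := hldiff (r0 E₂ ℓ₁) hA1
          have hEq1 : Esch M ℓ (r0 E₂ ℓ₁) = E^2 := by rw [← heq]; exact hB6
          have hiden := esch_ldiff M ℓ ℓ₁ (r0 E₂ ℓ₁) (ne_of_gt ha1pos)
          have hleq : ℓ = ℓ₁ := by
            by_contra hne
            have hpos : 0 < (ℓ - ℓ₁)*(r0 E₂ ℓ₁ - 2*M)/(r0 E₂ ℓ₁)^3 :=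
              div_pos (mul_pos (lt_of_le_of_ne (by linarith) (by intro h; exact hne (by linarith))) (by linarith)) (by positivity)
            linarith
          have hEeq : E = E₂ := by
            rw [hleq] at hEq1
            have hsq : E^2 = E₂^2 := by linarith
            refine le_antisymm hE.2 ?_
            nlinarith [hE0]
          rw [hleq, hEeq] at heq
          linarith
    linarith
  refine ⟨key, by linarith, (r1 E₂ ℓ₁ - r0 E₂ ℓ₁)/4, by linarith, ?_⟩
  intro E hE ℓ hℓ
  have := key E hE ℓ hℓ
  linarith
end
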